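/- (Theorem 1) Let n_1,…,n_s ≥ 2 be weights, I := {1,…,s}, and for every subset J ⊆ I put n_J := lcm(n_i : i ∈ J) with n_∅ := 1, and e_J := (∏_{i∈J} n_i)/n_J ∈ ℕ. Then in ℤ[X] one has the identity ∏_{J ⊆ I, s−|J| even} (X^{n_J} − 1)^{e_J} = χ_{[n_1,…,n_s]} · ∏_{J ⊆ I, s−|J| odd} (X^{n_J} − 1)^{e_J}; that is, χ_{[n_1,…,n_s]} = ∏_{J ⊆ I} ((X^{n_J} − 1)^{e_J})^{(−1)^{s−|J|}} as a rational function. -/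

import Mathlib

open Matrix Polynomial

/-- The Coxeter matrix `Φ_[n]` of the linearly oriented quiver of type `A_{n-1}`:
the `(n-1) × (n-1)` integer matrix whose `(i,j)`-entry is `1` if `j = i + 1`
(for rows other than the last), whose last row has all entries `-1`, and whose
other entries are `0`. -/
def PhiA (n : ℕ) : Matrix (Fin (n - 1)) (Fin (n - 1)) ℤ :=
  fun i j =>
    if (i : ℕ) = n - 2 then -1
    else if (j : ℕ) = (i : ℕ) + 1 then 1 else 0

/-- The Kronecker (tensor) product `Φ_{[n_1,…,n_s]} = Φ_{[n_1]} ⊗ ⋯ ⊗ Φ_{[n_s]}`,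
realized on the index type `Π i, Fin (n i - 1)`. -/
def PhiProd {s : ℕ} (n : Fin s → ℕ) :
    Matrix ((i : Fin s) → Fin (n i - 1)) ((i : Fin s) → Fin (n i - 1)) ℤ :=
  fun x y => ∏ i, PhiA (n i) (x i) (y i)

/-- The characteristic polynomial `χ_{[n_1,…,n_s]} ∈ ℤ[X]` of `Φ_{[n_1,…,n_s]}`. -/
noncomputable def Chi {s : ℕ} (n : Fin s → ℕ) : Polynomial ℤ :=
  (PhiProd n).charpoly

/-- The standard primitive complex `m`-th root of unity `exp(2π√-1/m)`. -/
noncomputable def zeta (m : ℕ) : ℂ := Complex.exp (2 * Real.pi * Complex.I / m)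
namespace ChiAux

lemma zeta_primitive (m : ℕ) (hm : m ≠ 0) : IsPrimitiveRoot (zeta m) m := by
  simpa [zeta] using Complex.isPrimitiveRoot_exp m hm

lemma zeta_ne_zero (m : ℕ) : zeta m ≠ 0 := Complex.exp_ne_zero _

variable {s : ℕ}

/-- exponential of a tuple of exponents -/
noncomputable def Ecx (n : Fin s → ℕ) (a : Fin s → ℕ) : ℂ := ∏ i, zeta (n i) ^ a i

def FF (n : Fin s → ℕ) (J : Finset (Fin s)) : Fin s → Finset ℕ :=
  fun i => Finset.range (if i ∈ J then n i else 1)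

def GG (n : Fin s → ℕ) (J : Finset (Fin s)) : Fin s → Finset ℕ :=
  fun i => if i ∈ J then Finset.Ico 1 (n i) else {0}

noncomputable def W (n : Fin s → ℕ) (c : ℂ) (F : Fin s → Finset ℕ) : Polynomial ℂ :=
  ∏ a ∈ Fintype.piFinset F, (X - C (c * Ecx n a))

lemma prod_piFinset_split {M : Type*} [CommMonoid M] (F : Fin s → Finset ℕ) (j : Fin s)
    (f : (Fin s → ℕ) → M) :
    ∏ a ∈ Fintype.piFinset F, f a
      = ∏ b ∈ F j, ∏ a ∈ Fintype.piFinset (Function.update F j {0}), f (Function.update a j b) := by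
  rw [← Finset.prod_product']
  refine Finset.prod_nbij' (fun a => (a j, Function.update a j 0))
    (fun p => Function.update p.2 j p.1) ?_ ?_ ?_ ?_ ?_
  · intro a ha
    rw [Fintype.mem_piFinset] at ha
    simp only [Finset.mem_product]
    refine ⟨ha j, ?_⟩
    rw [Fintype.mem_piFinset]
    intro i
    rcases eq_or_ne i j with rfl | h
    · simp
    · simpa [Function.update_of_ne h] using ha i
  · rintro ⟨b, a⟩ hp
    simp only [Finset.mem_product, Fintype.mem_piFinset] at hp
    rw [Fintype.mem_piFinset]
    intro i
    rcases eq_or_ne i j with rfl | h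
    · simpa using hp.1
    · have := hp.2 i
      simpa [Function.update_of_ne h] using this
  · intro a ha
    rw [Fintype.mem_piFinset] at ha
    funext i
    rcases eq_or_ne i j with rfl | h
    · simp
    · simp [Function.update_of_ne h]
  · rintro ⟨b, a⟩ hp
    simp only [Finset.mem_product, Fintype.mem_piFinset] at hp
    have haj : a j = 0 := by simpa using hp.2 j
    have h2 : Function.update (Function.update a j b) j 0 = a := by
      funext i
      rcases eq_or_ne i j with rfl | h
      · simp [haj]
      · simp [Function.update_of_ne h]
    simp [h2]
  · intro a ha
    simp only
    rw [Function.update_idem, Function.update_eq_self]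

lemma Ecx_update (n : Fin s → ℕ) (a : Fin s → ℕ) (j : Fin s) (b : ℕ) (ha : a j = 0) :
    Ecx n (Function.update a j b) = zeta (n j) ^ b * Ecx n a := by
  unfold Ecx
  have h1 : (fun i => zeta (n i) ^ Function.update a j b i)
      = Function.update (fun i => zeta (n i) ^ a i) j (zeta (n j) ^ b) := by
    funext i
    rcases eq_or_ne i j with rfl | h
    · simp
    · simp [Function.update_of_ne h]
  calc ∏ i, zeta (n i) ^ Function.update a j b i
      = ∏ i, Function.update (fun i => zeta (n i) ^ a i) j (zeta (n j) ^ b) i := by rw [h1]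
    _ = zeta (n j) ^ b * ∏ i ∈ Finset.univ \ {j}, zeta (n i) ^ a i := by
        rw [Finset.prod_update_of_mem (Finset.mem_univ j)]
    _ = zeta (n j) ^ b * ∏ i, zeta (n i) ^ a i := by
        congr 1
        rw [Finset.sdiff_singleton_eq_erase]
        apply Finset.prod_erase
        simp [ha]


lemma lcm_ne_zero' (n : Fin s → ℕ) (hn : ∀ i, 2 ≤ n i) (K : Finset (Fin s)) :
    K.lcm n ≠ 0 := by
  induction K using Finset.induction_on with
  | empty => simp
  | @insert j K hj ih =>
      rw [Finset.lcm_insert, lcm_eq_nat_lcm]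
      have := hn j
      exact Nat.lcm_ne_zero (by omega) ih

lemma lcm_dvd_prod (n : Fin s → ℕ) (K : Finset (Fin s)) :
    K.lcm n ∣ ∏ i ∈ K, n i :=
  Finset.lcm_dvd fun i hi => Finset.dvd_prod_of_mem n hi

lemma prod_range_mul_periodic {M : Type*} [CommMonoid M] (f : ℕ → M) (m g : ℕ)
    (hf : ∀ b, f (b + m) = f b) :
    ∏ b ∈ Finset.range (g * m), f b = (∏ b ∈ Finset.range m, f b) ^ g := by
  induction g with
  | zero => simp
  | succ g ih =>
      have hshift : ∀ k b, f (b + k * m) = f b := by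
        intro k
        induction k with
        | zero => simp
        | succ k ihk =>
            intro b
            rw [Nat.succ_mul, ← Nat.add_assoc, hf, ihk]
      rw [Nat.succ_mul, Finset.prod_range_add, ih, pow_succ]
      congr 1
      exact Finset.prod_congr rfl fun b _ => by rw [Nat.add_comm, hshift g b]

lemma core_prod (m q : ℕ) (hm : 0 < m) (η d : ℂ) (hη : IsPrimitiveRoot η m) :
    ∏ b ∈ Finset.range m, ((X : Polynomial ℂ) ^ q - C (d * η ^ b))
      = X ^ (q * m) - C (d ^ m) := by
  have h1 : (X : Polynomial ℂ) ^ m - C (d ^ m) = ∏ i ∈ Finset.range m, (X - C (η ^ i * d)) :=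
    X_pow_sub_C_eq_prod hη hm rfl
  have h2 := congrArg (fun p : Polynomial ℂ => p.comp ((X : Polynomial ℂ) ^ q)) h1
  simp only [Polynomial.sub_comp, Polynomial.pow_comp, Polynomial.X_comp, Polynomial.C_comp,
    Polynomial.prod_comp] at h2
  rw [← pow_mul] at h2
  have h3 : ∏ b ∈ Finset.range m, ((X : Polynomial ℂ) ^ q - C (d * η ^ b))
      = ∏ b ∈ Finset.range m, ((X : Polynomial ℂ) ^ q - C (η ^ b * d)) :=
    Finset.prod_congr rfl fun b _ => by rw [mul_comm]
  rw [h3]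
  exact h2.symm

lemma claimA (n : Fin s → ℕ) (hn : ∀ i, 2 ≤ n i) (K : Finset (Fin s)) :
    ∀ c : ℂ, c ≠ 0 →
      W n c (FF n K)
        = (X ^ (K.lcm n) - C (c ^ (K.lcm n))) ^ ((∏ i ∈ K, n i) / K.lcm n) := by
  induction K using Finset.induction_on with
  | empty =>
      intro c hc
      have hFF : Fintype.piFinset (FF n ∅) = {fun _ => 0} := by
        ext a
        simp [FF, Fintype.mem_piFinset, funext_iff, Nat.lt_one_iff]
      simp [W, hFF, Ecx]
  | @insert j K hj ih =>
      intro c hc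
      have hp2 : 2 ≤ n j := hn j
      have hp0 : n j ≠ 0 := by omega
      have hL'0 : K.lcm n ≠ 0 := lcm_ne_zero' n hn K
      set p := n j with hpdef
      set L' := K.lcm n with hL'def
      set g := Nat.gcd p L' with hgdef
      set m := p / g with hmdef
      have hgdvd : g ∣ p := Nat.gcd_dvd_left p L'
      have hg0 : g ≠ 0 := Nat.gcd_ne_zero_left hp0
      have hm0 : 0 < m := Nat.div_pos (Nat.le_of_dvd (by omega) hgdvd) (by omega)
      have hgm : g * m = p := Nat.mul_div_cancel' hgdvd
      have hLm : L' * m = Nat.lcm p L' := by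
        rw [hmdef, ← Nat.mul_div_assoc L' hgdvd, mul_comm L' p]
        rfl
      -- step 1 : split the product over the inserted coordinate
      have hFj : FF n (insert j K) j = Finset.range p := by simp [FF, hpdef]
      have hupd : Function.update (FF n (insert j K)) j {0} = FF n K := by
        funext i
        rcases eq_or_ne i j with rfl | h
        · simp [FF, hj]
        · simp [FF, Function.update_of_ne h, h]
      have hW : W n c (FF n (insert j K))
          = ∏ b ∈ Finset.range p, W n (c * zeta p ^ b) (FF n K) := by
        rw [W, prod_piFinset_split (FF n (insert j K)) j, hFj, hupd]
        refine Finset.prod_congr rfl fun b _ => ?_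
        rw [W]
        refine Finset.prod_congr rfl fun a ha => ?_
        have haj : a j = 0 := by
          rw [Fintype.mem_piFinset] at ha
          have := ha j
          simpa [FF, hj, Nat.lt_one_iff] using this
        rw [Ecx_update n a j b haj, ← mul_assoc]
      -- step 2 : use the induction hypothesis
      set η := zeta p ^ L' with hηdef
      set d := c ^ L' with hddef
      set e' := (∏ i ∈ K, n i) / L' with he'def
      have hW2 : W n c (FF n (insert j K))
          = (∏ b ∈ Finset.range p, ((X : Polynomial ℂ) ^ L' - C (d * η ^ b))) ^ e' := by
        rw [hW, ← Finset.prod_pow]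
        refine Finset.prod_congr rfl fun b _ => ?_
        rw [ih (c * zeta p ^ b) (mul_ne_zero hc (pow_ne_zero _ (zeta_ne_zero p)))]
        congr 2
        rw [mul_pow, hddef, hηdef, ← pow_mul, ← pow_mul, mul_comm b L']
      -- step 3 : η is a primitive m-th root of unity
      have hζp : IsPrimitiveRoot (zeta p) p := zeta_primitive p hp0
      have hηm : η ^ m = 1 := by
        rw [hηdef, ← pow_mul, (hζp.pow_eq_one_iff_dvd _), hLm]
        exact Nat.dvd_lcm_left p L'
      have hη : IsPrimitiveRoot η m := by
        constructor
        · exact hηm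
        · intro l hl
          rw [hηdef, ← pow_mul, (hζp.pow_eq_one_iff_dvd _)] at hl
          -- p ∣ L' * l, p = g * m, L' = g * (L'/g)
          have hgdvd' : g ∣ L' := Nat.gcd_dvd_right p L'
          have hL'' : g * (L' / g) = L' := Nat.mul_div_cancel' hgdvd'
          rw [← hgm, ← hL''] at hl
          have hl2 : m ∣ (L' / g) * l := by
            rw [mul_assoc] at hl
            exact (Nat.mul_dvd_mul_iff_left (by omega : 0 < g)).mp hl
          have hcop : Nat.Coprime m (L' / g) := by
            have := Nat.coprime_div_gcd_div_gcd
              (Nat.gcd_pos_of_pos_left L' (by omega : 0 < p))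
            exact this
          exact (Nat.Coprime.dvd_of_dvd_mul_left hcop hl2)
      -- step 4 : collapse the periodic product
      have hper : ∀ b : ℕ, ((X : Polynomial ℂ) ^ L' - C (d * η ^ (b + m)))
          = X ^ L' - C (d * η ^ b) := by
        intro b
        rw [pow_add, hηm, mul_one]
      have hW3 : W n c (FF n (insert j K))
          = ((X : Polynomial ℂ) ^ (L' * m) - C (d ^ m)) ^ (g * e') := by
        rw [hW2, ← hgm, prod_range_mul_periodic _ m g (fun b => hper b),
          core_prod m L' hm0 η d hη, ← pow_mul]
      -- step 5 : identify the exponents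
      have hlcm : (insert j K).lcm n = L' * m := by
        rw [Finset.lcm_insert, lcm_eq_nat_lcm, hLm]
      have hprod : ∏ i ∈ insert j K, n i = p * ∏ i ∈ K, n i := Finset.prod_insert hj
      have hLP' : L' ∣ ∏ i ∈ K, n i := lcm_dvd_prod n K
      have hPe : ∏ i ∈ K, n i = L' * e' := (Nat.mul_div_cancel' hLP').symm
      have hL0 : L' * m ≠ 0 := by
        have := lcm_ne_zero' n hn (insert j K)
        rw [hlcm] at this
        exact this
      have hexp : (∏ i ∈ insert j K, n i) / (L' * m) = g * e' := by
        rw [hprod, hPe, ← hgm]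
        have : g * m * (L' * e') = (L' * m) * (g * e') := by ring
        rw [this, Nat.mul_div_cancel_left _ (by omega : 0 < L' * m)]
      rw [hlcm, hexp, hW3, pow_mul c]


lemma W_split (n : Fin s → ℕ) (j : Fin s) (F G : Fin s → Finset ℕ) (t : Finset ℕ)
    (hFj : F j = t) (hupd : Function.update F j {0} = G) (hGj : G j = {0}) (c : ℂ) :
    W n c F = ∏ b ∈ t, W n (c * zeta (n j) ^ b) G := by
  rw [W, prod_piFinset_split F j, hFj, hupd]
  refine Finset.prod_congr rfl fun b _ => ?_
  rw [W]
  refine Finset.prod_congr rfl fun a ha => ?_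
  have haj : a j = 0 := by
    rw [Fintype.mem_piFinset] at ha
    have := ha j
    rw [hGj] at this
    simpa using this
  rw [Ecx_update n a j b haj, ← mul_assoc]

lemma claimC (n : Fin s → ℕ) (hn : ∀ i, 2 ≤ n i) (J : Finset (Fin s)) :
    ∀ c : ℂ, W n c (FF n J) = ∏ K ∈ J.powerset, W n c (GG n K) := by
  induction J using Finset.induction_on with
  | empty =>
      intro c
      rw [Finset.powerset_empty, Finset.prod_singleton]
      have hFG : FF n (∅ : Finset (Fin s)) = GG n ∅ := by
        funext i
        simp [FF, GG]
      rw [hFG]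
  | @insert j K hj ih =>
      intro c
      have hp0 : 0 < n j := by have := hn j; omega
      have hsplitF : W n c (FF n (insert j K))
          = ∏ b ∈ Finset.range (n j), W n (c * zeta (n j) ^ b) (FF n K) := by
        refine W_split n j _ _ _ ?_ ?_ ?_ c
        · simp [FF]
        · funext i
          rcases eq_or_ne i j with rfl | h
          · simp [FF, hj]
          · simp [FF, Function.update_of_ne h, h]
        · simp [FF, hj]
      have hpeel : ∏ b ∈ Finset.range (n j), W n (c * zeta (n j) ^ b) (FF n K)
          = W n c (FF n K) * ∏ b ∈ Finset.Ico 1 (n j), W n (c * zeta (n j) ^ b) (FF n K) := by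
        rw [Finset.range_eq_Ico, Finset.prod_eq_prod_Ico_succ_bot hp0]
        rw [pow_zero, mul_one]
      have hdisj : Disjoint K.powerset (K.powerset.image (insert j)) := by
        rw [Finset.disjoint_left]
        intro A hA hA'
        rw [Finset.mem_image] at hA'
        obtain ⟨B, hB, rfl⟩ := hA'
        rw [Finset.mem_powerset] at hA
        exact hj (hA (Finset.mem_insert_self j B))
      have hinj : ∀ A ∈ K.powerset, ∀ B ∈ K.powerset, insert j A = insert j B → A = B := by
        intro A hA B hB h
        rw [Finset.mem_powerset] at hA hB
        have hjA : j ∉ A := fun hmem => hj (hA hmem)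
        have hjB : j ∉ B := fun hmem => hj (hB hmem)
        rw [← Finset.erase_insert hjA, h, Finset.erase_insert hjB]
      rw [hsplitF, hpeel, ih c, Finset.powerset_insert, Finset.prod_union hdisj,
        Finset.prod_image hinj]
      congr 1
      calc ∏ b ∈ Finset.Ico 1 (n j), W n (c * zeta (n j) ^ b) (FF n K)
          = ∏ b ∈ Finset.Ico 1 (n j), ∏ K' ∈ K.powerset, W n (c * zeta (n j) ^ b) (GG n K') :=
            Finset.prod_congr rfl fun b _ => ih _
        _ = ∏ K' ∈ K.powerset, ∏ b ∈ Finset.Ico 1 (n j), W n (c * zeta (n j) ^ b) (GG n K') :=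
            Finset.prod_comm
        _ = ∏ K' ∈ K.powerset, W n c (GG n (insert j K')) := by
            refine Finset.prod_congr rfl fun K' hK' => ?_
            rw [Finset.mem_powerset] at hK'
            have hjK' : j ∉ K' := fun h => hj (hK' h)
            refine (W_split n j _ _ _ ?_ ?_ ?_ c).symm
            · simp [GG]
            · funext i
              rcases eq_or_ne i j with rfl | h
              · simp [GG, hjK']
              · simp [GG, Function.update_of_ne h, h]
            · simp [GG, hjK']


section Matrices

noncomputable def kron (n : Fin s → ℕ) (M : ∀ i, Matrix (Fin (n i - 1)) (Fin (n i - 1)) ℂ) :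
    Matrix ((i : Fin s) → Fin (n i - 1)) ((i : Fin s) → Fin (n i - 1)) ℂ :=
  fun x y => ∏ i, M i (x i) (y i)

lemma kron_apply (n : Fin s → ℕ) (M : ∀ i, Matrix (Fin (n i - 1)) (Fin (n i - 1)) ℂ)
    (x y : (i : Fin s) → Fin (n i - 1)) :
    kron n M x y = ∏ i, M i (x i) (y i) := rfl

lemma kron_mul (n : Fin s → ℕ) (M N : ∀ i, Matrix (Fin (n i - 1)) (Fin (n i - 1)) ℂ) :
    kron n M * kron n N = kron n (fun i => M i * N i) := by
  ext x y
  rw [Matrix.mul_apply, kron_apply]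
  simp only [kron_apply, Matrix.mul_apply]
  rw [Finset.prod_univ_sum]
  rw [← Fintype.piFinset_univ]
  exact Finset.sum_congr rfl fun z _ => Finset.prod_mul_distrib.symm

lemma kron_one (n : Fin s → ℕ) :
    kron n (fun _ => (1 : Matrix _ _ ℂ)) = 1 := by
  ext x y
  by_cases h : x = y
  · subst h
    rw [kron_apply, Matrix.one_apply_eq]
    simp [Matrix.one_apply_eq]
  · rw [kron_apply, Matrix.one_apply_ne h]
    obtain ⟨i, hi⟩ := Function.ne_iff.mp h
    exact Finset.prod_eq_zero (Finset.mem_univ i) (Matrix.one_apply_ne hi)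

lemma kron_diagonal (n : Fin s → ℕ) (d : ∀ i, Fin (n i - 1) → ℂ) :
    kron n (fun i => Matrix.diagonal (d i))
      = Matrix.diagonal (fun x : (i : Fin s) → Fin (n i - 1) => ∏ i, d i (x i)) := by
  ext x y
  by_cases h : x = y
  · subst h
    rw [kron_apply, Matrix.diagonal_apply_eq]
    exact Finset.prod_congr rfl fun i _ => Matrix.diagonal_apply_eq _ _
  · rw [kron_apply, Matrix.diagonal_apply_ne _ h]
    obtain ⟨i, hi⟩ := Function.ne_iff.mp h
    exact Finset.prod_eq_zero (Finset.mem_univ i) (Matrix.diagonal_apply_ne _ hi)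

lemma charpoly_conj {m : Type*} [Fintype m] [DecidableEq m] (A P Q : Matrix m m ℂ)
    (hPQ : P * Q = 1) : (P * A * Q).charpoly = A.charpoly := by
  have hPQ' : (C : ℂ →+* Polynomial ℂ).mapMatrix P * (C : ℂ →+* Polynomial ℂ).mapMatrix Q = 1 := by
    rw [← _root_.map_mul, hPQ, _root_.map_one]
  have hc : (C : ℂ →+* Polynomial ℂ).mapMatrix P * Matrix.scalar m (X : Polynomial ℂ)
      = Matrix.scalar m (X : Polynomial ℂ) * (C : ℂ →+* Polynomial ℂ).mapMatrix P :=
    ((Matrix.scalar_commute (X : Polynomial ℂ) (fun r' => Commute.all _ _) _).symm).eq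
  have hm : Matrix.charmatrix (P * A * Q)
      = (C : ℂ →+* Polynomial ℂ).mapMatrix P * Matrix.charmatrix A
        * (C : ℂ →+* Polynomial ℂ).mapMatrix Q := by
    rw [Matrix.charmatrix, Matrix.charmatrix, _root_.map_mul, _root_.map_mul, Matrix.mul_sub, Matrix.sub_mul]
    congr 1
    rw [hc, Matrix.mul_assoc, hPQ', Matrix.mul_one]
  rw [Matrix.charpoly, Matrix.charpoly, hm, Matrix.det_mul, Matrix.det_mul]
  have hdet : ((C : ℂ →+* Polynomial ℂ).mapMatrix P).det
      * ((C : ℂ →+* Polynomial ℂ).mapMatrix Q).det = 1 := by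
    rw [← Matrix.det_mul, hPQ', Matrix.det_one]
  rw [mul_right_comm, hdet, one_mul]

lemma charpoly_diagonal {m : Type*} [Fintype m] [DecidableEq m] (d : m → ℂ) :
    (Matrix.diagonal d).charpoly = ∏ i, (X - C (d i)) := by
  have h : Matrix.charmatrix (Matrix.diagonal d)
      = Matrix.diagonal (fun i => (X : Polynomial ℂ) - C (d i)) := by
    ext i j
    rcases eq_or_ne i j with rfl | hij
    · rw [Matrix.charmatrix_apply_eq, Matrix.diagonal_apply_eq, Matrix.diagonal_apply_eq]
    · rw [Matrix.charmatrix_apply_ne _ _ _ hij, Matrix.diagonal_apply_ne _ hij,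
        Matrix.diagonal_apply_ne _ hij, map_zero, neg_zero]
  rw [Matrix.charpoly, h, Matrix.det_diagonal]


noncomputable def Pm (m : ℕ) : Matrix (Fin (m - 1)) (Fin (m - 1)) ℂ :=
  fun j k => zeta m ^ (((k : ℕ) + 1) * (j : ℕ))

noncomputable def Dm (m : ℕ) : Matrix (Fin (m - 1)) (Fin (m - 1)) ℂ :=
  Matrix.diagonal (fun k => zeta m ^ ((k : ℕ) + 1))

lemma PhiA_mul_Pm (m : ℕ) (hm : 2 ≤ m) :
    (PhiA m).map (Int.castRingHom ℂ) * Pm m = Pm m * Dm m := by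
  have hm0 : m ≠ 0 := by omega
  have hζ : IsPrimitiveRoot (zeta m) m := zeta_primitive m hm0
  ext j k
  rw [Dm, Matrix.mul_diagonal, Matrix.mul_apply]
  set β : ℂ := zeta m ^ ((k : ℕ) + 1) with hβ
  have hklt : (k : ℕ) + 1 < m := by have := k.isLt; omega
  have hβ1 : β ≠ 1 := hζ.pow_ne_one_of_pos_of_lt (by omega) hklt
  have hβm : β ^ m = 1 := by
    rw [hβ, ← pow_mul, hζ.pow_eq_one_iff_dvd]
    exact dvd_mul_left m ((k : ℕ) + 1)
  have hPval : ∀ l : Fin (m - 1), Pm m l k = β ^ (l : ℕ) := by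
    intro l
    rw [Pm, hβ, ← pow_mul]
  by_cases hj : (j : ℕ) = m - 2
  · -- last row
    have hterm : ∀ l : Fin (m - 1),
        ((PhiA m).map (Int.castRingHom ℂ)) j l * Pm m l k = -β ^ (l : ℕ) := by
      intro l
      rw [Matrix.map_apply, PhiA, if_pos hj, hPval l]
      simp only [map_neg, _root_.map_one]
      ring
    rw [Finset.sum_congr rfl fun l _ => hterm l]
    rw [Finset.sum_neg_distrib]
    rw [Fin.sum_univ_eq_sum_range (fun l => β ^ l) (m - 1)]
    rw [geom_sum_eq hβ1]
    have hPjk : Pm m j k = β ^ ((j : ℕ)) := hPval j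
    rw [hPjk, hj]
    have hkey : β ^ (m - 2) * β = β ^ (m - 1) := by
      rw [← pow_succ]
      congr 1
      omega
    rw [hkey]
    have hkey2 : β ^ (m - 1) * β = 1 := by
      rw [← pow_succ]
      have : m - 1 + 1 = m := by omega
      rw [this, hβm]
    have hne : β - 1 ≠ 0 := sub_ne_zero.mpr hβ1
    field_simp
    linear_combination -hkey2
  · -- other rows
    have hjlt : (j : ℕ) + 1 < m - 1 := by
      have := j.isLt
      omega
    set l0 : Fin (m - 1) := ⟨(j : ℕ) + 1, hjlt⟩ with hl0
    have hterm : ∀ l : Fin (m - 1),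
        ((PhiA m).map (Int.castRingHom ℂ)) j l * Pm m l k
          = if l = l0 then β ^ ((j : ℕ) + 1) else 0 := by
      intro l
      rw [Matrix.map_apply, PhiA, if_neg hj, hPval l]
      rcases eq_or_ne l l0 with rfl | hne
      · rw [if_pos rfl, if_pos rfl]
        simp only [_root_.map_one]
        ring
      · rw [if_neg hne, if_neg ?_]
        · simp only [_root_.map_zero, zero_mul]
        · intro hcontra
          apply hne
          apply Fin.ext
          rw [hcontra, hl0]
    rw [Finset.sum_congr rfl fun l _ => hterm l, Finset.sum_ite_eq' Finset.univ l0
      (fun _ => β ^ ((j : ℕ) + 1)), if_pos (Finset.mem_univ l0)]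
    rw [hPval j, ← pow_succ]

lemma Pm_det_isUnit (m : ℕ) (hm : 2 ≤ m) : IsUnit (Pm m).det := by
  have hm0 : m ≠ 0 := by omega
  have hζ : IsPrimitiveRoot (zeta m) m := zeta_primitive m hm0
  have hPm : Pm m = (Matrix.vandermonde (fun k : Fin (m - 1) => zeta m ^ ((k : ℕ) + 1)))ᵀ := by
    ext j k
    rw [Matrix.transpose_apply, Matrix.vandermonde_apply, Pm, pow_mul]
  rw [hPm, Matrix.det_transpose, Matrix.det_vandermonde, isUnit_iff_ne_zero]
  rw [Finset.prod_ne_zero_iff]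
  intro i _
  rw [Finset.prod_ne_zero_iff]
  intro l hl
  rw [Finset.mem_Ioi] at hl
  apply sub_ne_zero.mpr
  intro hcontra
  have hi := i.isLt
  have hll := l.isLt
  have := hζ.pow_inj (by omega) (by omega) hcontra
  omega

lemma chi_complex (n : Fin s → ℕ) (hn : ∀ i, 2 ≤ n i) :
    (Chi n).map (Int.castRingHom ℂ)
      = ∏ x : (i : Fin s) → Fin (n i - 1), (X - C (∏ i, zeta (n i) ^ ((x i : ℕ) + 1))) := by
  rw [Chi, ← Matrix.charpoly_map]
  have h1 : (PhiProd n).map (Int.castRingHom ℂ)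
      = kron n (fun i => (PhiA (n i)).map (Int.castRingHom ℂ)) := by
    ext x y
    rw [Matrix.map_apply, PhiProd, kron_apply, map_prod]
    exact Finset.prod_congr rfl fun i _ => rfl
  rw [h1]
  have hu : ∀ i : Fin s, IsUnit (Pm (n i)).det := fun i => Pm_det_isUnit (n i) (hn i)
  have hPQ : kron n (fun i => Pm (n i)) * kron n (fun i => (Pm (n i))⁻¹) = 1 := by
    rw [kron_mul]
    have : (fun i => Pm (n i) * (Pm (n i))⁻¹) = fun _ : Fin s => (1 : Matrix _ _ ℂ) := by
      funext i
      exact Matrix.mul_nonsing_inv _ (hu i)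
    rw [this, kron_one]
  have hAP : kron n (fun i => (PhiA (n i)).map (Int.castRingHom ℂ)) * kron n (fun i => Pm (n i))
      = kron n (fun i => Pm (n i)) * kron n (fun i => Dm (n i)) := by
    have harg : (fun i : Fin s => (PhiA (n i)).map (Int.castRingHom ℂ) * Pm (n i))
        = (fun i : Fin s => Pm (n i) * Dm (n i)) := by
      funext i
      exact PhiA_mul_Pm (n i) (hn i)
    rw [kron_mul, kron_mul, harg]
  have hconj : kron n (fun i => (PhiA (n i)).map (Int.castRingHom ℂ))
      = kron n (fun i => Pm (n i)) * kron n (fun i => Dm (n i)) * kron n (fun i => (Pm (n i))⁻¹) := by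
    calc kron n (fun i => (PhiA (n i)).map (Int.castRingHom ℂ))
        = kron n (fun i => (PhiA (n i)).map (Int.castRingHom ℂ))
            * (kron n (fun i => Pm (n i)) * kron n (fun i => (Pm (n i))⁻¹)) := by
          rw [hPQ, Matrix.mul_one]
      _ = kron n (fun i => (PhiA (n i)).map (Int.castRingHom ℂ)) * kron n (fun i => Pm (n i))
            * kron n (fun i => (Pm (n i))⁻¹) := by rw [Matrix.mul_assoc]
      _ = kron n (fun i => Pm (n i)) * kron n (fun i => Dm (n i))
            * kron n (fun i => (Pm (n i))⁻¹) := by rw [hAP]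
  rw [hconj, charpoly_conj _ _ _ hPQ]
  have hD : kron n (fun i => Dm (n i))
      = Matrix.diagonal (fun x : (i : Fin s) → Fin (n i - 1) =>
          ∏ i, zeta (n i) ^ ((x i : ℕ) + 1)) := by
    have : (fun i : Fin s => Dm (n i))
        = fun i => Matrix.diagonal (fun k : Fin (n i - 1) => zeta (n i) ^ ((k : ℕ) + 1)) := by
      funext i
      rfl
    rw [this, kron_diagonal]
  rw [hD, charpoly_diagonal]

end Matrices

lemma chi_eq_W (n : Fin s → ℕ) (hn : ∀ i, 2 ≤ n i) :
    (Chi n).map (Int.castRingHom ℂ) = W n 1 (GG n Finset.univ) := by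
  rw [chi_complex n hn, W]
  refine Finset.prod_nbij' (fun x => fun i => (x i : ℕ) + 1)
    (fun a => fun i => (⟨min (a i - 1) (n i - 2), by have := hn i; omega⟩ : Fin (n i - 1)))
    ?_ ?_ ?_ ?_ ?_
  · intro x _
    rw [Fintype.mem_piFinset]
    intro i
    have hx := (x i).isLt
    have := hn i
    simp only [GG, if_pos (Finset.mem_univ i), Finset.mem_Ico]
    omega
  · intro a _
    exact Finset.mem_univ _
  · intro x _
    funext i
    apply Fin.ext
    have hx := (x i).isLt
    have := hn i
    simp only
    omega
  · intro a ha
    rw [Fintype.mem_piFinset] at ha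
    funext i
    have := ha i
    simp only [GG, if_pos (Finset.mem_univ i), Finset.mem_Ico] at this
    have h2 := hn i
    simp only
    omega
  · intro x _
    rw [one_mul, Ecx]

lemma count_even_odd (K : Finset (Fin s)) (hK : K ≠ Finset.univ) :
    (Finset.univ.filter fun J : Finset (Fin s) => K ⊆ J ∧ Even (s - J.card)).card
      = (Finset.univ.filter fun J : Finset (Fin s) => K ⊆ J ∧ ¬Even (s - J.card)).card := by
  obtain ⟨j, hj⟩ : ∃ j, j ∉ K := by
    by_contra h
    push_neg at h
    exact hK (Finset.eq_univ_iff_forall.mpr h)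
  set toggle : Finset (Fin s) → Finset (Fin s) :=
    fun J => if j ∈ J then J.erase j else insert j J with htog
  have hcard : ∀ J : Finset (Fin s), J.card ≤ s := by
    intro J
    have := Finset.card_le_univ J
    simpa using this
  have htapp : ∀ J : Finset (Fin s), toggle J = if j ∈ J then J.erase j else insert j J :=
    fun J => rfl
  have ht1 : ∀ J : Finset (Fin s), K ⊆ J → K ⊆ toggle J := by
    intro J hKJ
    rw [htapp]
    by_cases hjJ : j ∈ J
    · rw [if_pos hjJ]
      exact Finset.subset_erase.mpr ⟨hKJ, hj⟩
    · rw [if_neg hjJ]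
      exact hKJ.trans (Finset.subset_insert j J)
  have ht2 : ∀ J : Finset (Fin s), toggle (toggle J) = J := by
    intro J
    by_cases hjJ : j ∈ J
    · have h1 : toggle J = J.erase j := by rw [htapp, if_pos hjJ]
      rw [h1, htapp, if_neg (Finset.notMem_erase j J), Finset.insert_erase hjJ]
    · have h1 : toggle J = insert j J := by rw [htapp, if_neg hjJ]
      rw [h1, htapp, if_pos (Finset.mem_insert_self j J), Finset.erase_insert hjJ]
  have ht3 : ∀ J : Finset (Fin s), (¬Even (s - (toggle J).card)) ↔ Even (s - J.card) := by
    intro J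
    rw [htapp]
    by_cases hjJ : j ∈ J
    · rw [if_pos hjJ, Finset.card_erase_of_mem hjJ]
      have h1 : 1 ≤ J.card := Finset.card_pos.mpr ⟨j, hjJ⟩
      have h2 : J.card ≤ s := hcard J
      have : s - (J.card - 1) = (s - J.card) + 1 := by omega
      rw [this, Nat.even_add_one, not_not]
    · rw [if_neg hjJ, Finset.card_insert_of_notMem hjJ]
      have h2 : J.card < s := by
        rcases Nat.lt_or_ge J.card s with h | h
        · exact h
        · exfalso
          have : J.card = s := le_antisymm (hcard J) h
          have : J = Finset.univ := by
            apply Finset.eq_univ_of_card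
            simpa using this
          rw [this] at hjJ
          exact hjJ (Finset.mem_univ j)
      have : s - J.card = (s - (J.card + 1)) + 1 := by omega
      rw [this, Nat.even_add_one]
  refine Finset.card_nbij' toggle toggle ?_ ?_ ?_ ?_
  · intro J hJ
    rw [Finset.mem_coe, Finset.mem_filter] at hJ ⊢
    exact ⟨Finset.mem_univ _, ht1 J hJ.2.1, (ht3 J).mpr hJ.2.2⟩
  · intro J hJ
    rw [Finset.mem_coe, Finset.mem_filter] at hJ ⊢
    refine ⟨Finset.mem_univ _, ht1 J hJ.2.1, ?_⟩
    by_contra h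
    exact hJ.2.2 ((ht3 J).mp h)
  · intro J _
    exact ht2 J
  · intro J _
    exact ht2 J

lemma reorganize (V : Finset (Fin s) → Polynomial ℂ) (filtP : Finset (Fin s) → Prop)
    [DecidablePred filtP] :
    ∏ J ∈ Finset.univ.filter filtP, ∏ K ∈ J.powerset, V K
      = ∏ K : Finset (Fin s),
          V K ^ ((Finset.univ.filter fun J => K ⊆ J ∧ filtP J).card) := by
  rw [Finset.prod_comm' (t' := Finset.univ)
    (s' := fun K => Finset.univ.filter fun J => K ⊆ J ∧ filtP J) ?_]
  · exact Finset.prod_congr rfl fun K _ => Finset.prod_const (V K)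
  · intro J K
    simp only [Finset.mem_filter, Finset.mem_powerset, Finset.mem_univ, true_and]
    tauto

lemma assembly (n : Fin s → ℕ) (hn : ∀ i, 2 ≤ n i) :
    ∏ J ∈ Finset.univ.filter (fun J : Finset (Fin s) => Even (s - J.card)), W n 1 (FF n J)
      = W n 1 (GG n Finset.univ) *
        ∏ J ∈ Finset.univ.filter (fun J : Finset (Fin s) => ¬Even (s - J.card)),
          W n 1 (FF n J) := by
  set V : Finset (Fin s) → Polynomial ℂ := fun K => W n 1 (GG n K) with hV
  have hT : ∀ J ∈ (Finset.univ : Finset (Finset (Fin s))),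
      W n 1 (FF n J) = ∏ K ∈ J.powerset, V K := fun J _ => claimC n hn J 1
  rw [Finset.prod_congr rfl fun J hJ => hT J (Finset.mem_univ J),
    Finset.prod_congr rfl fun J hJ => hT J (Finset.mem_univ J),
    reorganize V (fun J => Even (s - J.card)),
    reorganize V (fun J => ¬Even (s - J.card))]
  have hper : ∀ K : Finset (Fin s),
      V K ^ ((Finset.univ.filter fun J => K ⊆ J ∧ Even (s - J.card)).card)
        = V K ^ ((Finset.univ.filter fun J => K ⊆ J ∧ ¬Even (s - J.card)).card)
          * (if K = Finset.univ then V K else 1) := by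
    intro K
    by_cases hK : K = Finset.univ
    · subst hK
      rw [if_pos rfl]
      have hcE : (Finset.univ.filter fun J : Finset (Fin s) =>
          Finset.univ ⊆ J ∧ Even (s - J.card)) = {Finset.univ} := by
        ext J
        simp only [Finset.mem_filter, Finset.mem_univ, true_and, Finset.mem_singleton,
          Finset.univ_subset_iff]
        constructor
        · rintro ⟨rfl, _⟩; rfl
        · rintro rfl
          exact ⟨rfl, by simp⟩
      have hcO : (Finset.univ.filter fun J : Finset (Fin s) =>
          Finset.univ ⊆ J ∧ ¬Even (s - J.card)) = ∅ := by
        ext J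
        simp only [Finset.mem_filter, Finset.mem_univ, true_and, Finset.notMem_empty,
          iff_false, not_and, Finset.univ_subset_iff]
        rintro rfl
        simp
      rw [hcE, hcO]
      simp
    · rw [if_neg hK, mul_one, count_even_odd K hK]
  rw [Finset.prod_congr rfl fun K _ => hper K, Finset.prod_mul_distrib,
    Finset.prod_ite_eq' Finset.univ Finset.univ V, if_pos (Finset.mem_univ _)]
  rw [mul_comm]

end ChiAux

open ChiAux in
theorem chi_formula {s : ℕ} (hs : 0 < s) (n : Fin s → ℕ) (hn : ∀ i, 2 ≤ n i) :
    ∏ J ∈ Finset.univ.filter (fun J : Finset (Fin s) => Even (s - J.card)),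
        ((X : Polynomial ℤ) ^ (J.lcm n) - 1) ^ ((∏ i ∈ J, n i) / J.lcm n)
      = Chi n *
        ∏ J ∈ Finset.univ.filter (fun J : Finset (Fin s) => ¬ Even (s - J.card)),
          ((X : Polynomial ℤ) ^ (J.lcm n) - 1) ^ ((∏ i ∈ J, n i) / J.lcm n) := by
  have hinj : Function.Injective (Polynomial.map (Int.castRingHom ℂ)) :=
    Polynomial.map_injective _ Int.cast_injective
  apply hinj
  have hA : ∀ J : Finset (Fin s),
      W n 1 (FF n J) = ((X : Polynomial ℂ) ^ (J.lcm n) - 1) ^ ((∏ i ∈ J, n i) / J.lcm n) := by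
    intro J
    rw [claimA n hn J 1 one_ne_zero, one_pow, _root_.map_one]
  have e1 : ∀ (t : Finset (Finset (Fin s))),
      (∏ J ∈ t, ((X : Polynomial ℤ) ^ (J.lcm n) - 1) ^ ((∏ i ∈ J, n i) / J.lcm n)).map
          (Int.castRingHom ℂ)
        = ∏ J ∈ t, W n 1 (FF n J) := by
    intro t
    rw [Polynomial.map_prod]
    refine Finset.prod_congr rfl fun J _ => ?_
    rw [Polynomial.map_pow, Polynomial.map_sub, Polynomial.map_pow, Polynomial.map_X,
      Polynomial.map_one, hA J]
  rw [Polynomial.map_mul, e1, e1, chi_eq_W n hn]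
  exact assembly n hn
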